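/- Let (R, m) be a local ring of depth > 1, and let I be an ideal of R. Then I is a Burch ideal if and only if there exists a nonzerodivisor a ∈ m such that R/m is isomorphic to a direct summand of the R-module I/aI. -/

import Mathlib

open IsLocalRing

section Helpers
variable {R : Type*} [CommRing R]

private lemma unit_mul_mem {J : Ideal R} {u x : R} (hu : IsUnit u) (h : u * x ∈ J) : x ∈ J := by
  have h2 := J.mul_mem_left (↑hu.unit⁻¹) h
  rwa [← mul_assoc, IsUnit.val_inv_mul, one_mul] at h2

private lemma exists_primary_of_not_nzd {s : Finset (Ideal R)}
    (hinf : s.inf id = ⊥) (hprim : ∀ ⦃J⦄, J ∈ s → J.IsPrimary) {x : R}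
    (hx : x ∉ nonZeroDivisors R) : ∃ Q ∈ s, x ∈ Q.radical := by
  rw [mem_nonZeroDivisors_iff_right] at hx
  push_neg at hx
  obtain ⟨z, hz0, hz⟩ := hx
  have hzQ : ∃ Q ∈ s, z ∉ Q := by
    by_contra h
    push_neg at h
    have hmem : z ∈ s.inf id := Submodule.mem_finsetInf.mpr fun i hi => h i hi
    rw [hinf] at hmem
    exact hz (by simpa using hmem)
  obtain ⟨Q, hQ, hzQ'⟩ := hzQ
  have := (Ideal.isPrimary_iff.mp (hprim hQ)).2 (x := z) (y := x)
    (by rw [hz0]; exact Q.zero_mem)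
  tauto

private lemma nzd_not_mem_radical [DecidableEq (Ideal R)] {s : Finset (Ideal R)}
    (hinf : s.inf id = ⊥) (hmin : ∀ ⦃J⦄, J ∈ s → ¬ (s.erase J).inf id ≤ J)
    {Q : Ideal R} (hQ : Q ∈ s) {a : R} (ha : a ∈ nonZeroDivisors R) :
    a ∉ Q.radical := by
  intro hrad
  obtain ⟨k, hk⟩ := Ideal.mem_radical_iff.mp hrad
  obtain ⟨x, hx, hxQ⟩ := SetLike.not_le_iff_exists.mp (hmin hQ)
  have hmem : a ^ k * x ∈ s.inf id := by
    rw [Submodule.mem_finsetInf]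
    intro J hJ
    by_cases hJQ : J = Q
    · subst hJQ; exact J.mul_mem_right x hk
    · have hxJ : x ∈ J := Submodule.mem_finsetInf.mp hx J (Finset.mem_erase.mpr ⟨hJQ, hJ⟩)
      exact J.mul_mem_left _ hxJ
  rw [hinf, Ideal.mem_bot] at hmem
  have hx0 : x = 0 :=
    mem_nonZeroDivisors_iff_right.mp (pow_mem ha k) x (by rwa [mul_comm] at hmem)
  exact hxQ (hx0 ▸ Q.zero_mem)

end Helpers

private lemma exists_nzd_mult {R : Type*} [CommRing R] [IsNoetherianRing R] [IsLocalRing R]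
    {a c t : R} {I : Ideal R}
    (ham : a ∈ maximalIdeal R) (hanzd : a ∈ nonZeroDivisors R)
    (hcm : c ∈ maximalIdeal R) (hct : c * t ∉ maximalIdeal R * I) :
    ∃ e, e ∈ maximalIdeal R ∧ e ∈ nonZeroDivisors R ∧ e * t ∉ maximalIdeal R * I := by
  classical
  by_contra hcon
  push_neg at hcon
  obtain ⟨s, hinf, hprim, -, hmin⟩ := Ideal.IsLasker.minimal (Ideal.isLasker R R) ⊥
  have hpow : ∀ n : ℕ, a ^ (n + 1) ∈ maximalIdeal R := fun n =>
    (maximalIdeal R).pow_mem_of_mem ham _ (Nat.succ_pos n)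
  have hcm' : ∀ n : ℕ, c + a ^ (n + 1) ∈ maximalIdeal R := fun n =>
    (maximalIdeal R).add_mem hcm (hpow n)
  have hreason : ∀ n : ℕ, ∃ o : Option (Ideal R),
      (o = none ∧ (c + a ^ (n + 1)) * t ∈ maximalIdeal R * I) ∨
      (∃ Q, o = some Q ∧ Q ∈ s ∧ c + a ^ (n + 1) ∈ Q.radical) := by
    intro n
    by_cases hm : (c + a ^ (n + 1)) * t ∈ maximalIdeal R * I
    · exact ⟨none, Or.inl ⟨rfl, hm⟩⟩
    · have hnz : c + a ^ (n + 1) ∉ nonZeroDivisors R := fun h => hm (hcon _ (hcm' n) h)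
      obtain ⟨Q, hQ, hrad⟩ := exists_primary_of_not_nzd hinf hprim hnz
      exact ⟨some Q, Or.inr ⟨Q, rfl, hQ, hrad⟩⟩
  choose F hF using hreason
  have key : ∀ i j : ℕ, i < j → F i ≠ F j := by
    intro i j hij heq
    have humem : a ^ (j - i) ∈ maximalIdeal R :=
      (maximalIdeal R).pow_mem_of_mem ham _ (Nat.sub_pos_of_lt hij)
    have hu : IsUnit (1 - a ^ (j - i)) :=
      IsLocalRing.isUnit_one_sub_self_of_mem_nonunits _ humem
    have hpowsplit : a ^ (j + 1) = a ^ (i + 1) * a ^ (j - i) := by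
      rw [← pow_add]; congr 1; omega
    rcases hF i with ⟨hnone_i, hmem_i⟩ | ⟨Q, hsome_i, hQs, hrad_i⟩
    · rcases hF j with ⟨hnone_j, hmem_j⟩ | ⟨Q, hsome_j, -, -⟩
      · have hsub : (1 - a ^ (j - i)) * (a ^ (i + 1) * t) ∈ maximalIdeal R * I := by
          have h := Ideal.sub_mem _ hmem_i hmem_j
          convert h using 1
          rw [hpowsplit]; ring
        have h3 := unit_mul_mem hu hsub
        have hctm : c * t ∈ maximalIdeal R * I := by
          have h := Ideal.sub_mem _ hmem_i h3
          convert h using 1; ring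
        exact hct hctm
      · rw [heq, hsome_j] at hnone_i; exact Option.some_ne_none _ hnone_i
    · rcases hF j with ⟨hnone_j, -⟩ | ⟨Q', hsome_j, hQs', hrad_j⟩
      · rw [← heq, hsome_i] at hnone_j; exact Option.some_ne_none _ hnone_j
      · have hQQ' : Q = Q' := by
          rw [heq, hsome_j] at hsome_i
          exact (Option.some.inj hsome_i).symm
        subst hQQ'
        have hprime : (Q.radical).IsPrime := Ideal.isPrime_radical (hprim hQs)
        have hdiff : a ^ (i + 1) * (1 - a ^ (j - i)) ∈ Q.radical := by
          have h := Q.radical.sub_mem hrad_i hrad_j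
          convert h using 1
          rw [hpowsplit]; ring
        rcases hprime.mem_or_mem hdiff with h | h
        · exact nzd_not_mem_radical hinf hmin hQs hanzd (hprime.mem_of_pow_mem _ h)
        · exact hprime.ne_top (Ideal.eq_top_of_isUnit_mem _ h hu)
  -- pigeonhole
  set T : Finset (Option (Ideal R)) := insert none (s.image some) with hT
  have hmaps : ∀ n ∈ Finset.range (T.card + 1), F n ∈ T := by
    intro n _
    rcases hF n with ⟨h, -⟩ | ⟨Q, h, hQ, -⟩
    · rw [h]; exact Finset.mem_insert_self _ _
    · rw [h]; exact Finset.mem_insert_of_mem (Finset.mem_image_of_mem _ hQ)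
  have hcard : T.card < (Finset.range (T.card + 1)).card := by
    rw [Finset.card_range]; omega
  obtain ⟨i, -, j, -, hij, heq⟩ :=
    Finset.exists_ne_map_eq_of_card_lt_of_maps_to hcard hmaps
  rcases lt_or_gt_of_ne hij with h | h
  · exact key i j h heq
  · exact key j i h heq.symm

/-- Lemma 2.8: let `(R, m)` be a Noetherian local ring of depth `> 1` (there is a regular
sequence `a, b` of length two in `m`). An ideal `I` is a Burch ideal if and only if there
exists a nonzerodivisor `a ∈ m` such that the residue field `R/m` is a direct summand of
the `R`-module `I/aI`. -/
theorem burch_iff_residue_summand_of_quotient {R : Type*} [CommRing R] [IsNoetherianRing R]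
    [IsLocalRing R]
    (hdepth : ∃ a b : R, a ∈ maximalIdeal R ∧ b ∈ maximalIdeal R ∧ a ∈ nonZeroDivisors R ∧
      ∀ r : R, b * r ∈ Ideal.span {a} → r ∈ Ideal.span {a})
    (I : Ideal R) :
    (maximalIdeal R * I ≠ maximalIdeal R * Submodule.colon I (maximalIdeal R)) ↔
      ∃ a ∈ maximalIdeal R, a ∈ nonZeroDivisors R ∧
        ∃ (f : ResidueField R →ₗ[R] (↥I ⧸ (Ideal.span {a} • ⊤ : Submodule R ↥I)))
          (g : (↥I ⧸ (Ideal.span {a} • ⊤ : Submodule R ↥I)) →ₗ[R] ResidueField R),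
          g.comp f = LinearMap.id := by
  classical
  constructor
  · -- Burch implies existence of splitting
    intro hne
    have hIle : I ≤ Submodule.colon I (maximalIdeal R) := fun x hx =>
      Submodule.mem_colon.mpr fun p hp => by
        rw [smul_eq_mul]; exact I.mul_mem_right p hx
    have hex : ∃ c ∈ maximalIdeal R, ∃ t ∈ Submodule.colon I (maximalIdeal R),
        c * t ∉ maximalIdeal R * I := by
      by_contra h
      push_neg at h
      apply hne
      refine le_antisymm (Ideal.mul_mono_right hIle) (Ideal.mul_le.mpr ?_)
      intro r hr s hs
      exact h r hr s hs
    obtain ⟨c, hcm, t, ht, hct⟩ := hex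
    obtain ⟨a0, b0, ha0m, hb0m, ha0nzd, hb0⟩ := hdepth
    obtain ⟨e, hem, henzd, het⟩ := exists_nzd_mult ha0m ha0nzd hcm hct
    refine ⟨e, hem, henzd, ?_⟩
    have hyI : e * t ∈ I := by
      have h := Submodule.mem_colon.mp ht e hem
      rwa [smul_eq_mul, mul_comm] at h
    set yv : ↥I := ⟨e * t, hyI⟩ with hyv
    set ybar : (↥I ⧸ (Ideal.span {e} • ⊤ : Submodule R ↥I)) := Submodule.Quotient.mk yv
      with hybar
    -- the map f
    have hker : maximalIdeal R ≤
        LinearMap.ker (LinearMap.toSpanSingleton R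
          (↥I ⧸ (Ideal.span {e} • ⊤ : Submodule R ↥I)) ybar) := by
      intro d hd
      rw [LinearMap.mem_ker, LinearMap.toSpanSingleton_apply, hybar,
        ← Submodule.Quotient.mk_smul, Submodule.Quotient.mk_eq_zero,
        Submodule.mem_smul_top_iff, Ideal.smul_eq_mul]
      have hdt : d * t ∈ I := by
        have h := Submodule.mem_colon.mp ht d hd
        rwa [smul_eq_mul, mul_comm] at h
      have hmem : e * (d * t) ∈ Ideal.span {e} * I :=
        Ideal.mul_mem_mul (Ideal.mem_span_singleton_self e) hdt
      have hcoe : ((d • yv : ↥I) : R) = e * (d * t) := by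
        simp only [hyv, SetLike.val_smul, smul_eq_mul]; ring
      rw [hcoe]
      exact hmem
    -- the vector space W = I/mI
    letI : Module (ResidueField R) (↥I ⧸ ((maximalIdeal R) • ⊤ : Submodule R ↥I)) :=
      inferInstanceAs (Module (R ⧸ maximalIdeal R)
        (↥I ⧸ ((maximalIdeal R) • ⊤ : Submodule R ↥I)))
    set w : (↥I ⧸ ((maximalIdeal R) • ⊤ : Submodule R ↥I)) := Submodule.Quotient.mk yv with hw
    have hw0 : w ≠ 0 := by
      rw [hw, Ne, Submodule.Quotient.mk_eq_zero, Submodule.mem_smul_top_iff,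
        Ideal.smul_eq_mul]
      exact het
    have hker0 : LinearMap.ker (LinearMap.toSpanSingleton (ResidueField R)
        (↥I ⧸ ((maximalIdeal R) • ⊤ : Submodule R ↥I)) w) = ⊥ :=
      LinearMap.ker_toSpanSingleton _ hw0
    obtain ⟨ψ, hψ⟩ := LinearMap.exists_leftInverse_of_injective _ hker0
    have hψw : ψ w = 1 := by
      have h := LinearMap.congr_fun hψ 1
      simpa [LinearMap.toSpanSingleton_apply] using h
    have hsmulW : ∀ (r : R) (x : ↥I),
        (Submodule.Quotient.mk (r • x) : (↥I ⧸ ((maximalIdeal R) • ⊤ : Submodule R ↥I))) =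
          (residue R r) • Submodule.Quotient.mk x := fun r x => rfl
    have hres_smul : ∀ (r : R) (z : ResidueField R), residue R r • z = r • z := by
      intro r z
      rw [Algebra.smul_def]; rfl
    set φ : ↥I →ₗ[R] ResidueField R :=
      { toFun := fun x => ψ (Submodule.Quotient.mk x)
        map_add' := fun x y => by
          rw [← map_add]
          rfl
        map_smul' := fun r x => by
          show ψ (Submodule.Quotient.mk (r • x)) =
            (RingHom.id R) r • ψ (Submodule.Quotient.mk x)
          rw [hsmulW, map_smul, RingHom.id_apply, hres_smul] } with hφ
    have hφker : (Ideal.span {e} • ⊤ : Submodule R ↥I) ≤ LinearMap.ker φ := by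
      intro x hx
      rw [LinearMap.mem_ker]
      have hx' : (x : R) ∈ Ideal.span {e} * I := by
        rw [← Ideal.smul_eq_mul, ← Submodule.mem_smul_top_iff]
        exact hx
      have hxm : (x : R) ∈ maximalIdeal R * I :=
        Ideal.mul_mono_left (Ideal.span_le.mpr (by simpa using hem)) hx'
      have hzero : (Submodule.Quotient.mk x :
          (↥I ⧸ ((maximalIdeal R) • ⊤ : Submodule R ↥I))) = 0 := by
        rw [Submodule.Quotient.mk_eq_zero, Submodule.mem_smul_top_iff, Ideal.smul_eq_mul]
        exact hxm
      show ψ (Submodule.Quotient.mk x) = 0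
      rw [hzero, map_zero]
    refine ⟨Submodule.liftQ (maximalIdeal R) _ hker,
      Submodule.liftQ (Ideal.span {e} • ⊤ : Submodule R ↥I) φ hφker, ?_⟩
    apply Submodule.linearMap_qext
    apply LinearMap.ext
    intro r
    show (Submodule.liftQ (Ideal.span {e} • ⊤ : Submodule R ↥I) φ hφker) (r • ybar) =
      (Submodule.Quotient.mk r : ResidueField R)
    rw [hybar, ← Submodule.Quotient.mk_smul, Submodule.liftQ_apply]
    show ψ (Submodule.Quotient.mk (r • yv)) = _
    rw [hsmulW, map_smul, hψw]
    show residue R r * 1 = _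
    rw [mul_one]
    rfl
  · -- splitting implies Burch
    rintro ⟨a, haM, hanzd, f, g, hgf⟩ heq
    obtain ⟨a0, b0, ha0m, hb0m, ha0nzd, hb0⟩ := hdepth
    obtain ⟨yv, hmk⟩ := Submodule.Quotient.mk_surjective _ (f 1)
    have hyI : (yv : R) ∈ I := yv.2
    have hmy : ∀ d ∈ maximalIdeal R, d * (yv : R) ∈ Ideal.span {a} * I := by
      intro d hd
      have h1 : d • (1 : ResidueField R) = 0 := by
        rw [Algebra.smul_def, mul_one]
        exact Ideal.Quotient.eq_zero_iff_mem.mpr hd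
      have h2 : d • f 1 = 0 := by rw [← map_smul, h1, map_zero]
      rw [← hmk, ← Submodule.Quotient.mk_smul, Submodule.Quotient.mk_eq_zero,
        Submodule.mem_smul_top_iff, Ideal.smul_eq_mul] at h2
      have hcoe : ((d • yv : ↥I) : R) = d * (yv : R) := rfl
      rwa [hcoe] at h2
    have hmy' : ∀ d ∈ maximalIdeal R, d * (yv : R) ∈ Ideal.span {a} := fun d hd =>
      Ideal.mul_le_left (hmy d hd)
    obtain ⟨u, hu⟩ := Ideal.mem_span_singleton'.mp (hmy' a0 ha0m)
    obtain ⟨v, hv⟩ := Ideal.mem_span_singleton'.mp (hmy' b0 hb0m)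
    -- b0 * u = a0 * v
    have hcancel : b0 * u = a0 * v := by
      have h : (b0 * u - a0 * v) * a = 0 := by
        calc (b0 * u - a0 * v) * a = b0 * (u * a) - a0 * (v * a) := by ring
        _ = 0 := by rw [hu, hv]; ring
      exact sub_eq_zero.mp (mem_nonZeroDivisors_iff_right.mp hanzd _ h)
    have huspan : u ∈ Ideal.span {a0} := by
      apply hb0
      rw [hcancel, Ideal.mem_span_singleton]
      exact Dvd.intro v rfl
    obtain ⟨s, hs⟩ := Ideal.mem_span_singleton'.mp huspan
    have hy_eq : (yv : R) = a * s := by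
      have h : ((yv : R) - a * s) * a0 = 0 := by
        calc ((yv : R) - a * s) * a0 = a0 * (yv : R) - a0 * (a * s) := by ring
        _ = 0 := by rw [← hu, ← hs]; ring
      exact sub_eq_zero.mp (mem_nonZeroDivisors_iff_right.mp ha0nzd _ h)
    have hscolon : s ∈ Submodule.colon I (maximalIdeal R) := by
      rw [Submodule.mem_colon]
      intro p hp
      rw [smul_eq_mul]
      obtain ⟨z, hzI, hz⟩ := Ideal.mem_span_singleton_mul.mp (hmy p hp)
      have hz2 : p * s = z := by
        have h0 : (p * s - z) * a = 0 := by
          calc (p * s - z) * a = p * (a * s) - a * z := by ring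
          _ = p * (yv : R) - a * z := by rw [hy_eq]
          _ = 0 := by rw [hz]; ring
        exact sub_eq_zero.mp (mem_nonZeroDivisors_iff_right.mp hanzd _ h0)
      rw [mul_comm, hz2]
      exact hzI
    have hymI : (yv : R) ∈ maximalIdeal R * I := by
      rw [heq]
      rw [hy_eq]
      exact Ideal.mul_mem_mul haM hscolon
    have hymem : yv ∈ ((maximalIdeal R) • ⊤ : Submodule R ↥I) := by
      rw [Submodule.mem_smul_top_iff, Ideal.smul_eq_mul]
      exact hymI
    have hf1 : f 1 ∈ ((maximalIdeal R) •
        (⊤ : Submodule R (↥I ⧸ (Ideal.span {a} • ⊤ : Submodule R ↥I)))) := by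
      rw [← hmk]
      have hle : (((maximalIdeal R) • (⊤ : Submodule R ↥I)).map
          (Submodule.mkQ (Ideal.span {a} • ⊤ : Submodule R ↥I))) ≤
          (maximalIdeal R) • ⊤ := by
        rw [Submodule.map_smul'']
        exact Submodule.smul_mono le_rfl le_top
      exact hle ⟨yv, hymem, rfl⟩
    have hg1 : (1 : ResidueField R) ∈
        ((maximalIdeal R) • (⊤ : Submodule R (ResidueField R))) := by
      have hle : (((maximalIdeal R) •
          (⊤ : Submodule R (↥I ⧸ (Ideal.span {a} • ⊤ : Submodule R ↥I)))).map g) ≤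
          (maximalIdeal R) • ⊤ := by
        rw [Submodule.map_smul'']
        exact Submodule.smul_mono le_rfl le_top
      have := hle ⟨f 1, hf1, rfl⟩
      rwa [show g (f 1) = 1 from LinearMap.congr_fun hgf 1] at this
    have hbot : ((maximalIdeal R) • (⊤ : Submodule R (ResidueField R))) = ⊥ := by
      rw [eq_bot_iff]
      apply Submodule.smul_le.mpr
      intro r hr z _
      obtain ⟨z', rfl⟩ := Ideal.Quotient.mk_surjective z
      have : r • (Ideal.Quotient.mk (maximalIdeal R) z' : ResidueField R) =
          residue R (r * z') := by
        rw [Algebra.smul_def]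
        rfl
      refine (congrArg (· ∈ (⊥ : Submodule R (ResidueField R))) this).mpr ?_
      have h0 : residue R (r * z') = 0 :=
        Ideal.Quotient.eq_zero_iff_mem.mpr ((maximalIdeal R).mul_mem_right z' hr)
      rw [h0]
      exact Submodule.zero_mem ⊥
    rw [hbot] at hg1
    have h10 : (1 : ResidueField R) = 0 := (Submodule.mem_bot R).mp hg1
    exact one_ne_zero h10
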